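/- In a Wheeler graph with ordered nodes x_1 < ... < x_n and m edges, the LF mapping induced by the succinct representation is order-preserving: if e and e' are edges labeled a and a' with destinations v and v' respectively, and either a < a', or a = a' and e precedes e' in the order of source nodes, then v ≤ v'; restricted to the BOSS setting where each destination is reached by exactly one marked edge (W^-[i]=1), the mapping LF from marked edge positions to destination node ranks is a strictly increasing bijection onto {2,...,n} satisfying: W[i]<W[j] ⇒ LF(i)<LF(j), and W[i]=W[j] ∧ i<j ⇒ LF(i)<LF(j). -/
import Mathlib


/-- Order preservation of the LF mapping in a Wheeler graph / BOSS
representation.  Nodes are `Fin n` (already in Wheeler order), edges are the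
positions `Fin m` with source `src i`, label `W i` and destination `dst i`
(`dst = LF`).  Positions are sorted by source and, within a source, by label
(BOSS layout).  The Wheeler conditions appear as hypotheses `hA`, `hB`; `mark`
marks, for each destination, the edge with the smallest source (`W⁻`), and
`v1` (the node `$^k`) is the unique node with in-degree 0.  Conclusions:
(1) generally, `a < a'`, or `a = a'` and the sources are ordered, forces the
destinations to satisfy `v ≤ v'`; (2) on marked positions, LF is strictly
monotone in the sense `W i < W j → LF i < LF j` and
`W i = W j ∧ i < j → LF i < LF j`, and it is a bijection from the marked
positions onto the nodes different from `v1` (i.e. `{2,…,n}`). -/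
theorem stmt_17 {A : Type} [LinearOrder A] (n m : ℕ)
    (src dst : Fin m → Fin n) (W : Fin m → A) (mark : Fin m → Bool)
    (v1 : Fin n)
    (hsorted : ∀ i j : Fin m, i < j → src i ≤ src j)
    (hsortlab : ∀ i j : Fin m, src i = src j → i < j → W i < W j)
    (hA : ∀ i j : Fin m, W i < W j → dst i < dst j)
    (hB : ∀ i j : Fin m, W i = W j → src i < src j → dst i ≤ dst j)
    (hmark : ∀ i : Fin m, mark i = true ↔
      ∀ j : Fin m, j ≠ i → dst j = dst i → src i < src j)
    (hv1 : ∀ i : Fin m, dst i ≠ v1)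
    (hsurj : ∀ v : Fin n, v ≠ v1 → ∃ i : Fin m, dst i = v) :
    (∀ i j : Fin m, (W i < W j ∨ (W i = W j ∧ src i < src j)) → dst i ≤ dst j) ∧
    (∀ i j : Fin m, mark i = true → mark j = true →
      (W i < W j → dst i < dst j) ∧ (W i = W j → i < j → dst i < dst j)) ∧
    (Set.BijOn dst {i : Fin m | mark i = true} {v : Fin n | v ≠ v1}) := by

  refine ⟨?_, ?_, ?_, ?_, ?_⟩
  · intro i j h
    rcases h with h | ⟨h1, h2⟩
    · exact le_of_lt (hA i j h)
    · exact hB i j h1 h2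
  · intro i j hi hj
    refine ⟨fun h => hA i j h, fun hW hij => ?_⟩
    have hsrc : src i < src j := by
      rcases lt_or_eq_of_le (hsorted i j hij) with h | h
      · exact h
      · exact absurd (hsortlab i j h hij) (by simp [hW])
    have hle := hB i j hW hsrc
    rcases lt_or_eq_of_le hle with h | h
    · exact h
    · exact absurd (((hmark j).mp hj) i (ne_of_lt hij) h) (not_lt.mpr hsrc.le)
  · intro i hi
    exact hv1 i
  · intro i hi j hj hij
    by_contra hne
    have h1 := ((hmark i).mp hi) j (Ne.symm hne) hij.symm
    have h2 := ((hmark j).mp hj) i hne hij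
    exact absurd h2 (not_lt.mpr h1.le)
  · intro v hv
    obtain ⟨i0, hi0⟩ := hsurj v hv
    classical
    set S : Finset (Fin m) := Finset.univ.filter (fun i => dst i = v) with hS
    have hne : S.Nonempty := ⟨i0, by simp [hS, hi0]⟩
    set i := S.min' hne with hidef
    have hiS : dst i = v := by
      have := S.min'_mem hne
      simpa [hS] using this
    refine ⟨i, ?_, hiS⟩
    show mark i = true
    rw [hmark]
    intro j hj hdj
    have hjS : j ∈ S := by simp [hS, hdj, hiS]
    have hij : i ≤ j := S.min'_le j hjS
    have hij' : i < j := lt_of_le_of_ne hij (Ne.symm hj)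
    rcases lt_or_eq_of_le (hsorted i j hij') with h | h
    · exact h
    · exact absurd (hA i j (hsortlab i j h hij')) (by simp [hdj, hiS])
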